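/- For every n ≥ 1: if n is odd then H²(QuaternionGroup n, ℤ/2ℤ) is isomorphic to ℤ/2ℤ, and if n is even then H²(QuaternionGroup n, ℤ/2ℤ) is isomorphic to (ℤ/2ℤ)². -/

import Mathlib

open groupCohomology QuaternionGroup Finset

abbrev GG (n : ℕ) := QuaternionGroup n
noncomputable abbrev AA (n : ℕ) : Rep (ZMod 2) (GG n) := Rep.trivial (ZMod 2) (GG n) (ZMod 2)

abbrev twoCocycles {n : ℕ} (A : Rep (ZMod 2) (GG n)) := cocycles₂ A
abbrev twoCoboundaries {n : ℕ} (A : Rep (ZMod 2) (GG n)) : Submodule (ZMod 2) (cocycles₂ A) :=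
  (coboundaries₂ A).comap (cocycles₂ A).subtype

/-- cocycle condition, mathlib-order -/
def IsCo (n : ℕ) (f : GG n × GG n → ZMod 2) : Prop :=
  ∀ g h j : GG n, f (g * h, j) + f (g, h) = f (h, j) + f (g, h * j)

theorem mem_tc {n : ℕ} (f : GG n × GG n → ZMod 2) : f ∈ twoCocycles (AA n) ↔ IsCo n f := by
  rw [mem_cocycles₂_iff]
  exact forall_congr' fun g => forall_congr' fun h => forall_congr' fun j => by
    rw [Rep.trivial_ρ_apply]

theorem mem_cb {n : ℕ} (f : twoCocycles (AA n)) : f ∈ twoCoboundaries (AA n) ↔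
    ∃ φ : GG n → ZMod 2, ∀ g h : GG n, φ h - φ (g * h) + φ g = f (g, h) := by
  rw [Submodule.mem_comap, coboundaries₂, LinearMap.mem_range]
  exact exists_congr fun φ => by
    show (d₁₂ (AA n)).hom φ = (f : GG n × GG n → ZMod 2) ↔ _
    rw [funext_iff, Prod.forall]
    simp only [d₁₂_hom_apply]
    rfl

/-- the three relator functionals -/
def alphaF (n : ℕ) (f : GG n × GG n → ZMod 2) : ZMod 2 :=
  ∑ k ∈ range (2 * n), f (a 1, a (k : ZMod (2 * n)))

def betaF (n : ℕ) (f : GG n × GG n → ZMod 2) : ZMod 2 :=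
  f (xa 0, xa 0) + ∑ k ∈ Ico 1 n, f (a 1, a (k : ZMod (2 * n)))

def gammaF (n : ℕ) (f : GG n × GG n → ZMod 2) : ZMod 2 :=
  f (a 1, xa 0) + f (xa (-1), a 1)

/-- wrapper type for the central extension -/
@[ext] structure QExt (n : ℕ) where
  t : ZMod 2
  g : QuaternionGroup n

lemma two_eq_zero : (2 : ZMod 2) = 0 := rfl

lemma zmod2_add_self (u : ZMod 2) : u + u = 0 := by revert u; decide


theorem key {n : ℕ} (hn : 1 ≤ n) (f : GG n × GG n → ZMod 2) (hf : IsCo n f)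
    (h11 : f (1, 1) = 0)
    (hpar : (Odd n ∧ alphaF n f = 0) ∨ (Even n ∧ betaF n f = 0 ∧ gammaF n f = 0)) :
    ∃ φ : GG n → ZMod 2, ∀ g h : GG n, φ h - φ (g * h) + φ g = f (g, h) := by
  haveI : NeZero (2 * n) := ⟨by omega⟩
  have htwo : (2 : ZMod 2) = 0 := rfl
  have h1g : ∀ g : GG n, f (1, g) = 0 := by
    intro g
    have h := hf 1 1 g
    rw [one_mul, one_mul, h11] at h
    linear_combination -h
  have hg1 : ∀ g : GG n, f (g, 1) = 0 := by
    intro g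
    have h := hf g 1 1
    rw [mul_one, one_mul, h11] at h
    linear_combination h
  letI : Group (QExt n) :=
    { mul := fun e e' => ⟨e.t + e'.t + f (e.g, e'.g), e.g * e'.g⟩
      one := ⟨0, 1⟩
      inv := fun e => ⟨e.t + f (e.g, e.g⁻¹), e.g⁻¹⟩
      mul_assoc := by
        rintro ⟨s, g⟩ ⟨t, h⟩ ⟨u, j⟩
        refine QExt.ext ?_ ?_
        · show s + t + f (g, h) + u + f (g * h, j) = s + (t + u + f (h, j)) + f (g, h * j)
          linear_combination hf g h j
        · exact mul_assoc g h j
      one_mul := by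
        rintro ⟨s, g⟩
        refine QExt.ext ?_ ?_
        · show 0 + s + f (1, g) = s
          rw [h1g]; ring
        · exact one_mul g
      mul_one := by
        rintro ⟨s, g⟩
        refine QExt.ext ?_ ?_
        · show s + 0 + f (g, 1) = s
          rw [hg1]; ring
        · exact mul_one g
      inv_mul_cancel := by
        rintro ⟨s, g⟩
        have h := hf g g⁻¹ g
        rw [mul_inv_cancel, inv_mul_cancel, h1g, hg1] at h
        refine QExt.ext ?_ ?_
        · show s + f (g, g⁻¹) + s + f (g⁻¹, g) = 0
          linear_combination h + (s + f (g⁻¹, g)) * htwo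
        · exact inv_mul_cancel g }
  -- component lemmas
  have ht_mul : ∀ e e' : QExt n, (e * e').t = e.t + e'.t + f (e.g, e'.g) := fun _ _ => rfl
  have hzl : ∀ (s : ZMod 2) (e : QExt n), (⟨s, 1⟩ : QExt n) * e = ⟨s + e.t, e.g⟩ := by
    intro s e
    refine QExt.ext ?_ ?_
    · show s + e.t + f (1, e.g) = s + e.t
      rw [h1g]; ring
    · exact one_mul e.g
  have hzr : ∀ (s : ZMod 2) (e : QExt n), e * (⟨s, 1⟩ : QExt n) = ⟨s + e.t, e.g⟩ := by
    intro s e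
    refine QExt.ext ?_ ?_
    · show e.t + s + f (e.g, 1) = s + e.t
      rw [hg1]; ring
    · exact mul_one e.g
  have hzcomm : ∀ (s : ZMod 2) (e : QExt n), (⟨s, 1⟩ : QExt n) * e = e * ⟨s, 1⟩ := by
    intro s e; rw [hzl, hzr]
  have hzpow : ∀ (s : ZMod 2) (k : ℕ), (⟨s, 1⟩ : QExt n) ^ k = ⟨(k : ZMod 2) * s, 1⟩ := by
    intro s k
    induction k with
    | zero => rw [pow_zero, Nat.cast_zero, zero_mul]; rfl
    | succ m ih =>
      rw [pow_succ', ih, hzl]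
      refine QExt.ext ?_ rfl
      show s + (m : ZMod 2) * s = ((m + 1 : ℕ) : ZMod 2) * s
      push_cast; ring
  -- powers of A0
  have hA0pow : ∀ k : ℕ, (⟨0, a 1⟩ : QExt n) ^ k =
      ⟨∑ j ∈ Finset.range k, f (a 1, a (j : ZMod (2 * n))), a (k : ZMod (2 * n))⟩ := by
    intro k
    induction k with
    | zero =>
      rw [pow_zero, Finset.range_zero, Finset.sum_empty, Nat.cast_zero]
      exact QExt.ext rfl one_def
    | succ m ih =>
      rw [pow_succ', ih]
      refine QExt.ext ?_ ?_
      · show 0 + (∑ j ∈ Finset.range m, f (a 1, a (j : ZMod (2 * n)))) + f (a 1, a (m : ZMod (2 * n)))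
            = ∑ j ∈ Finset.range (m + 1), f (a 1, a (j : ZMod (2 * n)))
        rw [Finset.sum_range_succ]; ring
      · show a 1 * a (m : ZMod (2 * n)) = a ((m + 1 : ℕ) : ZMod (2 * n))
        rw [a_mul_a]; congr 1; push_cast; ring
  have hαval : (⟨0, a 1⟩ : QExt n) ^ (2 * n) = ⟨alphaF n f, 1⟩ := by
    rw [hA0pow]
    exact QExt.ext rfl (by rw [ZMod.natCast_self]; exact one_def.symm)
  have hsumIco : ∑ j ∈ Finset.range n, f (a 1, a (j : ZMod (2 * n)))
      = ∑ j ∈ Finset.Ico 1 n, f (a 1, a (j : ZMod (2 * n))) := by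
    rw [Finset.range_eq_Ico, Finset.sum_eq_sum_Ico_succ_bot (by omega : 0 < n)]
    rw [Nat.cast_zero, ← one_def, hg1, zero_add]
  have hXXA : (⟨0, xa 0⟩ : QExt n) * ⟨0, xa 0⟩ = (⟨betaF n f, 1⟩ : QExt n) * (⟨0, a 1⟩ : QExt n) ^ n := by
    rw [hA0pow, hzl]
    refine QExt.ext ?_ ?_
    · show 0 + 0 + f (xa 0, xa 0) = betaF n f + ∑ j ∈ Finset.range n, f (a 1, a (j : ZMod (2 * n)))
      rw [hsumIco]
      show 0 + 0 + f (xa 0, xa 0)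
          = (f (xa 0, xa 0) + ∑ j ∈ Finset.Ico 1 n, f (a 1, a (j : ZMod (2 * n))))
            + ∑ j ∈ Finset.Ico 1 n, f (a 1, a (j : ZMod (2 * n)))
      linear_combination (-(∑ j ∈ Finset.Ico 1 n, f (a 1, a (j : ZMod (2 * n))))) * htwo
    · show xa 0 * xa 0 = a (n : ZMod (2 * n))
      rw [xa_mul_xa]; congr 1; ring
  have hγval : (⟨0, a 1⟩ : QExt n) * ⟨0, xa 0⟩ * ⟨0, a 1⟩ = (⟨gammaF n f, 1⟩ : QExt n) * ⟨0, xa 0⟩ := by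
    rw [hzl]
    refine QExt.ext ?_ ?_
    · show (0 + 0 + f (a 1, xa 0)) + 0 + f (a 1 * xa 0, a 1) = gammaF n f + 0
      rw [a_mul_xa]
      show 0 + 0 + f (a 1, xa 0) + 0 + f (xa (0 - 1), a 1) = gammaF n f + 0
      rw [zero_sub]
      show 0 + 0 + f (a 1, xa 0) + 0 + f (xa (-1), a 1) = f (a 1, xa 0) + f (xa (-1), a 1) + 0
      ring
    · show a 1 * xa 0 * a 1 = xa 0
      rw [a_mul_xa, xa_mul_a]; congr 1; ring
  -- notation
  set A0 : QExt n := ⟨0, a 1⟩ with hA0def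
  set X : QExt n := ⟨0, xa 0⟩ with hXdef
  have hzmid : ∀ (s : ZMod 2) (e e' : QExt n),
      e * ((⟨s, 1⟩ : QExt n) * e') = (⟨s, 1⟩ : QExt n) * (e * e') := by
    intro s e e'
    rw [← mul_assoc, ← hzcomm, mul_assoc]
  -- conjugation relation
  have hXAX : X * A0 * X⁻¹ = (⟨gammaF n f, 1⟩ : QExt n) * A0⁻¹ := by
    have e2 : A0 * (X * A0 * X⁻¹) = (⟨gammaF n f, 1⟩ : QExt n) := by
      rw [← mul_assoc, ← mul_assoc, hγval, mul_assoc, mul_inv_cancel, mul_one]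
    have e3 : X * A0 * X⁻¹ = A0⁻¹ * (⟨gammaF n f, 1⟩ : QExt n) := by
      rw [← e2, ← mul_assoc, inv_mul_cancel, one_mul]
    rw [e3, ← hzcomm]
  have hconjApow : X * A0 ^ n * X⁻¹ = (⟨(n : ZMod 2) * gammaF n f, 1⟩ : QExt n) * (A0⁻¹) ^ n := by
    have e1 := map_pow (MulAut.conj X) A0 n
    simp only [MulAut.conj_apply] at e1
    rw [hXAX] at e1
    rw [e1, Commute.mul_pow (hzcomm _ _), hzpow]
  have halphagamma : alphaF n f = (n : ZMod 2) * gammaF n f := by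
    have e4 : X * (X * X) * X⁻¹ = X * X := by
      rw [← mul_assoc, mul_inv_cancel_right]
    nth_rewrite 1 [hXXA] at e4
    rw [hXXA] at e4
    rw [hzmid, mul_assoc, hconjApow] at e4
    have e5' : (⟨(n : ZMod 2) * gammaF n f, 1⟩ : QExt n) * (A0⁻¹) ^ n = A0 ^ n :=
      mul_left_cancel e4
    have e7 : A0 ^ (n + n) = (⟨(n : ZMod 2) * gammaF n f, 1⟩ : QExt n) := by
      rw [pow_add]
      nth_rewrite 1 [← e5']
      rw [inv_pow, mul_assoc, inv_mul_cancel, mul_one]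
    have e8 : (⟨alphaF n f, 1⟩ : QExt n) = ⟨(n : ZMod 2) * gammaF n f, 1⟩ := by
      rw [← hαval, ← e7]; congr 1; ring
    exact congrArg QExt.t e8
  -- parity split
  have hsplit : gammaF n f = 0 ∧ alphaF n f = 0 ∧ (n : ZMod 2) * betaF n f = betaF n f := by
    rcases hpar with ⟨ho, hα0⟩ | ⟨he, hβ0, hγ0⟩
    · have hn2 : (n : ZMod 2) = 1 := by
        have h := (Nat.odd_iff).mp ho
        rw [← ZMod.natCast_mod, h, Nat.cast_one]
      rw [hα0, hn2, one_mul] at halphagamma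
      exact ⟨halphagamma.symm, hα0, by rw [hn2, one_mul]⟩
    · have hn2 : (n : ZMod 2) = 0 := by
        have h := (Nat.even_iff).mp he
        rw [← ZMod.natCast_mod, h, Nat.cast_zero]
      refine ⟨hγ0, ?_, by rw [hβ0, mul_zero]⟩
      rw [halphagamma, hn2, zero_mul]
  obtain ⟨hγ0, hα0, hcβ⟩ := hsplit
  -- the adjusted generator
  set A : QExt n := ⟨betaF n f, a 1⟩ with hAdef
  have hA_eq : A = (⟨betaF n f, 1⟩ : QExt n) * A0 := by
    rw [hzl]
    exact QExt.ext (by show betaF n f = betaF n f + (0 : ZMod 2); ring) rfl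
  have hA2n : A ^ (2 * n) = 1 := by
    rw [hA_eq, Commute.mul_pow (hzcomm _ _), hzpow, hαval]
    have hc : ((2 * n : ℕ) : ZMod 2) = 0 := by push_cast; rw [htwo]; ring
    rw [hc, zero_mul, hα0, hzl]
    exact QExt.ext (by show (0 : ZMod 2) + 0 = (1 : QExt n).t; rfl) rfl
  have hXXA' : X * X = A ^ n := by
    rw [hA_eq, Commute.mul_pow (hzcomm _ _), hzpow, hcβ, hXXA]
  have hγ0' : f (a 1, xa 0) + f (xa (-1), a 1) = 0 := hγ0
  have hAXA : A * X * A = X := by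
    refine QExt.ext ?_ ?_
    · show (betaF n f + 0 + f (a 1, xa 0)) + betaF n f + f (a 1 * xa 0, a 1) = (0 : ZMod 2)
      rw [a_mul_xa, zero_sub]
      linear_combination hγ0' + betaF n f * htwo
    · show a 1 * xa 0 * a 1 = xa 0
      rw [a_mul_xa, xa_mul_a]; congr 1; ring
  have hAX : A * X = X * A⁻¹ := by
    have h := congrArg (fun w => w * A⁻¹) hAXA
    rw [mul_inv_cancel_right] at h
    exact h
  have hconj1 : X⁻¹ * A * X = A⁻¹ := by
    rw [mul_assoc, hAX, ← mul_assoc, inv_mul_cancel, one_mul]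
  have hconjA : ∀ t : ℤ, X⁻¹ * A ^ t * X = A ^ (-t) := by
    intro t
    have h := map_zpow (MulAut.conj X⁻¹) A t
    simp only [MulAut.conj_apply, inv_inv] at h
    rw [hconj1] at h
    rw [h, inv_zpow, zpow_neg]
  have hAtX : ∀ t : ℤ, A ^ t * X = X * A ^ (-t) := by
    intro t
    rw [← hconjA t, ← mul_assoc, ← mul_assoc, mul_inv_cancel, one_mul]
  have hAmod : ∀ t s : ℤ, ((t : ZMod (2 * n)) = (s : ZMod (2 * n))) → A ^ t = A ^ s := by
    intro t s hts
    have h0 : (((t - s : ℤ)) : ZMod (2 * n)) = 0 := by push_cast; rw [hts]; ring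
    obtain ⟨m, hm⟩ := (ZMod.intCast_zmod_eq_zero_iff_dvd _ _).mp h0
    have ht' : t = s + (2 * n : ℕ) * m := by rw [← hm]; ring
    rw [ht', zpow_add, zpow_mul, zpow_natCast, hA2n, one_zpow, mul_one]
  have castval : ∀ i : ZMod (2 * n), ((i.val : ℕ) : ZMod (2 * n)) = i :=
    fun i => ZMod.natCast_rightInverse i
  have keycast : ∀ (t : ℤ) (i : ZMod (2 * n)),
      (t : ZMod (2 * n)) = i → A ^ t = A ^ ((i.val : ℕ) : ℤ) := by
    intro t i h
    refine hAmod t _ ?_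
    rw [h]; push_cast; rw [castval]
  set sh : GG n → QExt n := fun g =>
    match g with
    | QuaternionGroup.a i => A ^ ((i.val : ℕ) : ℤ)
    | QuaternionGroup.xa i => X * A ^ ((i.val : ℕ) : ℤ)
    with hshdef
  have hg_pow : ∀ (e : QExt n) (t : ℤ), (e ^ t).g = e.g ^ t := by
    intro e t
    let π : QExt n →* GG n :=
      { toFun := QExt.g, map_one' := rfl, map_mul' := fun _ _ => rfl }
    exact map_zpow π e t
  have hAg : A.g = a 1 := rfl
  have hsg : ∀ g : GG n, (sh g).g = g := by
    rintro (i | i)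
    · show (A ^ ((i.val : ℕ) : ℤ)).g = a i
      rw [hg_pow, hAg, zpow_natCast, a_one_pow, castval]
    · show (X * A ^ ((i.val : ℕ) : ℤ)).g = xa i
      have h : (X * A ^ ((i.val : ℕ) : ℤ)).g = xa 0 * (A ^ ((i.val : ℕ) : ℤ)).g := rfl
      rw [h, hg_pow, hAg, zpow_natCast, a_one_pow, xa_mul_a, zero_add, castval]
  have hmulS : ∀ g h : GG n, sh g * sh h = sh (g * h) := by
    rintro (i | i) (j | j)
    · show A ^ ((i.val : ℕ) : ℤ) * A ^ ((j.val : ℕ) : ℤ) = A ^ (((i + j).val : ℕ) : ℤ)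
      rw [← zpow_add]
      refine keycast _ _ ?_
      push_cast
      rw [castval, castval]
    · show A ^ ((i.val : ℕ) : ℤ) * (X * A ^ ((j.val : ℕ) : ℤ))
          = X * A ^ (((j - i).val : ℕ) : ℤ)
      rw [← mul_assoc, hAtX, mul_assoc, ← zpow_add]
      congr 1
      refine keycast _ _ ?_
      push_cast
      rw [castval, castval]
      ring
    · show X * A ^ ((i.val : ℕ) : ℤ) * A ^ ((j.val : ℕ) : ℤ)
          = X * A ^ (((i + j).val : ℕ) : ℤ)
      rw [mul_assoc, ← zpow_add]
      congr 1
      refine keycast _ _ ?_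
      push_cast
      rw [castval, castval]
    · show X * A ^ ((i.val : ℕ) : ℤ) * (X * A ^ ((j.val : ℕ) : ℤ))
          = A ^ ((((n : ZMod (2 * n)) + j - i).val : ℕ) : ℤ)
      rw [mul_assoc, ← mul_assoc (A ^ ((i.val : ℕ) : ℤ)) X (A ^ ((j.val : ℕ) : ℤ)), hAtX,
        mul_assoc X (A ^ (-((i.val : ℕ) : ℤ))) (A ^ ((j.val : ℕ) : ℤ)), ← zpow_add,
        ← mul_assoc, hXXA', ← zpow_natCast A n, ← zpow_add]
      refine keycast _ _ ?_
      push_cast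
      rw [castval, castval]
      ring
  refine ⟨fun g => (sh g).t, ?_⟩
  intro g h
  have hm := congrArg QExt.t (hmulS g h)
  rw [ht_mul, hsg, hsg] at hm
  linear_combination hm - f (g, h) * htwo
section Cob
variable {n : ℕ}

lemma sum_shift (m : ℕ) (F : ℕ → ZMod 2) :
    ∑ k ∈ Finset.range m, F (k + 1) = (∑ k ∈ Finset.range m, F k) - F 0 + F m := by
  have h1 := Finset.sum_range_succ' F m
  have h2 := Finset.sum_range_succ F m
  linear_combination h2 - h1

lemma hterm_cob (f : GG n × GG n → ZMod 2) (φ : GG n → ZMod 2)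
    (hφ : ∀ g h : GG n, φ h - φ (g * h) + φ g = f (g, h)) (k : ℕ) :
    f (a 1, a (k : ZMod (2 * n))) =
      φ (a (k : ZMod (2 * n))) - φ (a ((k + 1 : ℕ) : ZMod (2 * n))) + φ (a 1) := by
  have h := hφ (a 1) (a (k : ZMod (2 * n)))
  rw [a_mul_a] at h
  rw [← h]
  congr 3
  push_cast; ring

lemma alphaF_cob (f : GG n × GG n → ZMod 2) (φ : GG n → ZMod 2)
    (hφ : ∀ g h : GG n, φ h - φ (g * h) + φ g = f (g, h)) : alphaF n f = 0 := by
  have htwo : (2 : ZMod 2) = 0 := rfl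
  have hsum : alphaF n f = ∑ k ∈ Finset.range (2 * n),
      (φ (a (k : ZMod (2 * n))) - φ (a ((k + 1 : ℕ) : ZMod (2 * n))) + φ (a 1)) :=
    Finset.sum_congr rfl fun k _ => hterm_cob f φ hφ k
  rw [hsum, Finset.sum_add_distrib, Finset.sum_sub_distrib, Finset.sum_const,
    Finset.card_range, sum_shift (2*n) (fun k => φ (a (k : ZMod (2*n)))), show (((2 * n : ℕ)) : ZMod (2 * n)) = ((0 : ℕ) : ZMod (2 * n))
      by rw [ZMod.natCast_self, Nat.cast_zero], nsmul_eq_mul]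
  push_cast
  rw [htwo]
  ring

lemma gammaF_cob (f : GG n × GG n → ZMod 2) (φ : GG n → ZMod 2)
    (hφ : ∀ g h : GG n, φ h - φ (g * h) + φ g = f (g, h)) : gammaF n f = 0 := by
  have htwo : (2 : ZMod 2) = 0 := rfl
  have h1 := hφ (a 1) (xa 0)
  have h2 := hφ (xa (-1)) (a 1)
  rw [a_mul_xa, zero_sub] at h1
  rw [xa_mul_a, neg_add_cancel] at h2
  unfold gammaF
  rw [← h1, ← h2]
  linear_combination φ (a 1) * htwo

lemma betaF_cob (hn : 1 ≤ n) (he : Even n) (f : GG n × GG n → ZMod 2) (φ : GG n → ZMod 2)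
    (hφ : ∀ g h : GG n, φ h - φ (g * h) + φ g = f (g, h)) : betaF n f = 0 := by
  have htwo : (2 : ZMod 2) = 0 := rfl
  have hxx := hφ (xa 0) (xa 0)
  rw [xa_mul_xa, show ((n : ZMod (2 * n)) + 0 - 0) = ((n : ℕ) : ZMod (2 * n)) by ring] at hxx
  have hsum : ∑ k ∈ Finset.Ico 1 n, f (a 1, a (k : ZMod (2 * n)))
      = ∑ k ∈ Finset.range (n - 1),
        (φ (a ((1 + k : ℕ) : ZMod (2 * n))) - φ (a ((1 + k + 1 : ℕ) : ZMod (2 * n))) + φ (a 1)) := by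
    rw [Finset.sum_Ico_eq_sum_range]
    exact Finset.sum_congr rfl fun k _ => hterm_cob f φ hφ (1 + k)
  have htel : ∑ k ∈ Finset.range (n - 1),
      (φ (a ((1 + k : ℕ) : ZMod (2 * n))) - φ (a ((1 + k + 1 : ℕ) : ZMod (2 * n))))
      = φ (a ((1 : ℕ) : ZMod (2 * n))) - φ (a ((1 + (n - 1) : ℕ) : ZMod (2 * n))) := by
    exact Finset.sum_range_sub' (fun k => φ (a ((1 + k : ℕ) : ZMod (2 * n)))) (n - 1)
  unfold betaF
  rw [hsum, Finset.sum_add_distrib, htel, Finset.sum_const, Finset.card_range,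
    show (1 + (n - 1) : ℕ) = n by omega, nsmul_eq_mul, ← hxx]
  have hcast : ((n - 1 : ℕ) : ZMod 2) = (n : ZMod 2) - 1 := by
    push_cast [hn]; ring
  rw [hcast, show ((n : ℕ) : ZMod 2) = 0 by
    rw [← ZMod.natCast_mod, Nat.even_iff.mp he, Nat.cast_zero], Nat.cast_one]
  linear_combination (φ (xa 0) - φ (a ((n : ℕ) : ZMod (2 * n)))) * htwo

end Cob

/-- kernel of the invariants consists of coboundaries -/
theorem ker_to_cob {n : ℕ} (hn : 1 ≤ n) (f : GG n × GG n → ZMod 2) (hf : IsCo n f)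
    (hpar : (Odd n ∧ alphaF n f = 0) ∨ (Even n ∧ betaF n f = 0 ∧ gammaF n f = 0)) :
    ∃ φ : GG n → ZMod 2, ∀ g h : GG n, φ h - φ (g * h) + φ g = f (g, h) := by
  have htwo : (2 : ZMod 2) = 0 := rfl
  set c0 : ZMod 2 := f (1, 1) with hc0
  set f' : GG n × GG n → ZMod 2 := fun p => f p + c0 with hf'
  have hf'co : IsCo n f' := by
    intro g h j
    show (f (g * h, j) + c0) + (f (g, h) + c0) = (f (h, j) + c0) + (f (g, h * j) + c0)
    linear_combination hf g h j
  have hf'11 : f' (1, 1) = 0 := by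
    show f (1, 1) + c0 = 0
    rw [hc0]
    linear_combination hc0 + f (1, 1) * htwo
  have halpha' : alphaF n f' = alphaF n f := by
    unfold alphaF
    rw [show (∑ k ∈ Finset.range (2*n), f' (a 1, a (k : ZMod (2*n))))
        = ∑ k ∈ Finset.range (2*n), (f (a 1, a (k : ZMod (2*n))) + c0) from rfl,
      Finset.sum_add_distrib, Finset.sum_const, Finset.card_range, nsmul_eq_mul]
    push_cast
    rw [htwo]
    ring
  have hgamma' : gammaF n f' = gammaF n f := by
    show (f (a 1, xa 0) + c0) + (f (xa (-1), a 1) + c0) = gammaF n f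
    unfold gammaF
    linear_combination c0 * htwo
  have hbeta' : Even n → betaF n f' = betaF n f := by
    intro he
    unfold betaF
    rw [show (∑ k ∈ Finset.Ico 1 n, f' (a 1, a (k : ZMod (2*n))))
        = ∑ k ∈ Finset.Ico 1 n, (f (a 1, a (k : ZMod (2*n))) + c0) from rfl,
      Finset.sum_add_distrib, Finset.sum_const, Nat.card_Ico, nsmul_eq_mul]
    show f (xa 0, xa 0) + c0 + _ = _
    have hcast : ((n - 1 : ℕ) : ZMod 2) = (n : ZMod 2) - 1 := by push_cast [hn]; ring
    rw [hcast, show ((n : ℕ) : ZMod 2) = 0 by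
      rw [← ZMod.natCast_mod, Nat.even_iff.mp he, Nat.cast_zero]]
    ring
  have hpar' : (Odd n ∧ alphaF n f' = 0) ∨ (Even n ∧ betaF n f' = 0 ∧ gammaF n f' = 0) := by
    rcases hpar with ⟨ho, h0⟩ | ⟨he, hb, hg⟩
    · exact Or.inl ⟨ho, by rw [halpha', h0]⟩
    · exact Or.inr ⟨he, by rw [hbeta' he, hb], by rw [hgamma', hg]⟩
  obtain ⟨φ', hφ'⟩ := key hn f' hf'co hf'11 hpar'
  refine ⟨fun g => φ' g + c0, ?_⟩
  intro g h
  have h1 := hφ' g h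
  show (φ' h + c0) - (φ' (g * h) + c0) + (φ' g + c0) = f (g, h)
  have h2 : f' (g, h) = f (g, h) + c0 := rfl
  rw [h2] at h1
  linear_combination h1 + c0 * htwo
section Explicit
variable {n : ℕ}

def carry (u v : ZMod 4) : ZMod 2 := if 4 ≤ u.val + v.val then 1 else 0

lemma carry_co : ∀ u v w : ZMod 4,
    carry (u + v) w + carry u v = carry v w + carry u (v + w) := by decide

/-- reduction mod 2 -/
def c2 (n : ℕ) : ZMod (2 * n) →+* ZMod 2 := ZMod.castHom ⟨n, rfl⟩ (ZMod 2)

def psiF (n : ℕ) : GG n → ZMod 4 := fun g =>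
  match g with
  | QuaternionGroup.a i => 2 * (((c2 n i).val : ℕ) : ZMod 4)
  | QuaternionGroup.xa i => 1 + 2 * (((c2 n i).val : ℕ) : ZMod 4)

lemma psiF_mul (ho : Odd n) : ∀ g h : GG n, psiF n (g * h) = psiF n g + psiF n h := by
  have hn2 : ((n : ℕ) : ZMod 2) = 1 := by
    rw [← ZMod.natCast_mod, Nat.odd_iff.mp ho, Nat.cast_one]
  rintro (i | i) (j | j)
  · show 2 * (((c2 n (i + j)).val : ℕ) : ZMod 4)
        = 2 * (((c2 n i).val : ℕ) : ZMod 4) + 2 * (((c2 n j).val : ℕ) : ZMod 4)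
    rw [map_add]
    generalize c2 n i = u; generalize c2 n j = v
    revert u v; decide
  · show 1 + 2 * (((c2 n (j - i)).val : ℕ) : ZMod 4)
        = 2 * (((c2 n i).val : ℕ) : ZMod 4) + (1 + 2 * (((c2 n j).val : ℕ) : ZMod 4))
    rw [map_sub]
    generalize c2 n i = u; generalize c2 n j = v
    revert u v; decide
  · show 1 + 2 * (((c2 n (i + j)).val : ℕ) : ZMod 4)
        = (1 + 2 * (((c2 n i).val : ℕ) : ZMod 4)) + 2 * (((c2 n j).val : ℕ) : ZMod 4)
    rw [map_add]
    generalize c2 n i = u; generalize c2 n j = v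
    revert u v; decide
  · show 2 * (((c2 n ((n : ZMod (2 * n)) + j - i)).val : ℕ) : ZMod 4)
        = (1 + 2 * (((c2 n i).val : ℕ) : ZMod 4)) + (1 + 2 * (((c2 n j).val : ℕ) : ZMod 4))
    rw [map_sub, map_add, map_natCast, hn2]
    generalize c2 n i = u; generalize c2 n j = v
    revert u v; decide

lemma fodd_co (ho : Odd n) : IsCo n (fun p => carry (psiF n p.1) (psiF n p.2)) := by
  intro g h j
  show carry (psiF n (g * h)) (psiF n j) + carry (psiF n g) (psiF n h)
      = carry (psiF n h) (psiF n j) + carry (psiF n g) (psiF n (h * j))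
  rw [psiF_mul ho, psiF_mul ho]
  exact carry_co _ _ _

lemma sum_parityF (F : ZMod 2 → ZMod 2) (m : ℕ) :
    ∑ k ∈ Finset.range (2 * m), F ((k : ℕ) : ZMod 2) = (m : ZMod 2) * (F 0 + F 1) := by
  have h2 : ((2 : ℕ) : ZMod 2) = 0 := ZMod.natCast_self 2
  induction m with
  | zero => simp
  | succ p ih =>
    rw [show 2 * (p + 1) = (2 * p + 1) + 1 by ring, Finset.sum_range_succ,
      Finset.sum_range_succ, ih]
    rw [show (((2 * p : ℕ)) : ZMod 2) = 0 by rw [Nat.cast_mul, h2, zero_mul],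
      show (((2 * p + 1 : ℕ)) : ZMod 2) = 1 by rw [Nat.cast_add, Nat.cast_mul, h2, zero_mul,
        Nat.cast_one, zero_add]]
    push_cast
    ring

lemma alpha_fodd (ho : Odd n) :
    alphaF n (fun p => carry (psiF n p.1) (psiF n p.2)) = 1 := by
  have hn2 : ((n : ℕ) : ZMod 2) = 1 := by
    rw [← ZMod.natCast_mod, Nat.odd_iff.mp ho, Nat.cast_one]
  have hterm : ∀ k : ℕ, carry (psiF n (a 1)) (psiF n (a ((k : ℕ) : ZMod (2 * n))))
      = carry 2 (2 * (((((k : ℕ) : ZMod 2)).val : ℕ) : ZMod 4)) := by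
    intro k
    have e1 : psiF n (a 1) = 2 := by
      show 2 * (((c2 n 1).val : ℕ) : ZMod 4) = 2
      rw [map_one]
      decide
    have e2 : psiF n (a ((k : ℕ) : ZMod (2 * n)))
        = 2 * (((((k : ℕ) : ZMod 2)).val : ℕ) : ZMod 4) := by
      show 2 * (((c2 n ((k : ℕ) : ZMod (2 * n))).val : ℕ) : ZMod 4) = _
      rw [map_natCast]
    rw [e1, e2]
  unfold alphaF
  rw [Finset.sum_congr rfl fun k _ => hterm k,
    sum_parityF (fun u => carry 2 (2 * ((u.val : ℕ) : ZMod 4))) n, hn2, one_mul]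
  decide

/-- the two 1-dimensional characters -/
def yF (n : ℕ) : GG n → ZMod 2 := fun g =>
  match g with
  | QuaternionGroup.a _ => 0
  | QuaternionGroup.xa _ => 1

def xF (n : ℕ) : GG n → ZMod 2 := fun g =>
  match g with
  | QuaternionGroup.a i => c2 n i
  | QuaternionGroup.xa i => c2 n i

lemma yF_mul : ∀ g h : GG n, yF n (g * h) = yF n g + yF n h := by
  rintro (i | i) (j | j)
  · show (0 : ZMod 2) = 0 + 0
    rw [add_zero]
  · show (1 : ZMod 2) = 0 + 1
    rw [zero_add]
  · show (1 : ZMod 2) = 1 + 0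
    rw [add_zero]
  · show (0 : ZMod 2) = 1 + 1
    decide

lemma xF_mul (he : Even n) : ∀ g h : GG n, xF n (g * h) = xF n g + xF n h := by
  have hn2 : ((n : ℕ) : ZMod 2) = 0 := by
    rw [← ZMod.natCast_mod, Nat.even_iff.mp he, Nat.cast_zero]
  rintro (i | i) (j | j)
  · show c2 n (i + j) = c2 n i + c2 n j
    rw [map_add]
  · show c2 n (j - i) = c2 n i + c2 n j
    rw [map_sub]
    generalize c2 n i = u; generalize c2 n j = v
    revert u v; decide
  · show c2 n (i + j) = c2 n i + c2 n j
    rw [map_add]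
  · show c2 n ((n : ZMod (2 * n)) + j - i) = c2 n i + c2 n j
    rw [map_sub, map_add, map_natCast, hn2]
    generalize c2 n i = u; generalize c2 n j = v
    revert u v; decide

lemma cup_co (u v : GG n → ZMod 2) (hu : ∀ g h : GG n, u (g * h) = u g + u h)
    (hv : ∀ g h : GG n, v (g * h) = v g + v h) :
    IsCo n (fun p => u p.1 * v p.2) := by
  intro g h j
  show u (g * h) * v j + u g * v h = u h * v j + u g * v (h * j)
  rw [hu, hv]
  ring

lemma beta_yy : betaF n (fun p => yF n p.1 * yF n p.2) = 1 := by
  unfold betaF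
  show (1 : ZMod 2) * 1 + (∑ k ∈ Finset.Ico 1 n, (0 : ZMod 2) * yF n (a (k : ZMod (2 * n)))) = 1
  simp

lemma gamma_yy : gammaF n (fun p => yF n p.1 * yF n p.2) = 0 := by
  show (0 : ZMod 2) * 1 + 1 * 0 = 0
  ring

lemma beta_xy : betaF n (fun p => xF n p.1 * yF n p.2) = 0 := by
  unfold betaF
  show (c2 n 0) * 1 + (∑ k ∈ Finset.Ico 1 n, (c2 n 1) * (0 : ZMod 2)) = 0
  simp

lemma gamma_xy : gammaF n (fun p => xF n p.1 * yF n p.2) = 1 := by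
  show (c2 n 1) * 1 + (c2 n (-1)) * 0 = 1
  rw [map_one, one_mul, mul_zero, add_zero]

end Explicit
section Assemble
variable {n : ℕ}

lemma alphaF_add (f g : GG n × GG n → ZMod 2) :
    alphaF n (f + g) = alphaF n f + alphaF n g := by
  unfold alphaF
  rw [← Finset.sum_add_distrib]
  rfl

lemma alphaF_smul (c : ZMod 2) (f : GG n × GG n → ZMod 2) :
    alphaF n (c • f) = c * alphaF n f := by
  unfold alphaF
  rw [Finset.mul_sum]
  rfl

lemma betaF_add (f g : GG n × GG n → ZMod 2) :
    betaF n (f + g) = betaF n f + betaF n g := by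
  unfold betaF
  show (f (xa 0, xa 0) + g (xa 0, xa 0))
      + (∑ k ∈ Finset.Ico 1 n, (f (a 1, a (k : ZMod (2 * n))) + g (a 1, a (k : ZMod (2 * n))))) = _
  rw [Finset.sum_add_distrib]
  ring

lemma betaF_smul (c : ZMod 2) (f : GG n × GG n → ZMod 2) :
    betaF n (c • f) = c * betaF n f := by
  unfold betaF
  rw [mul_add, Finset.mul_sum]
  rfl

lemma gammaF_add (f g : GG n × GG n → ZMod 2) :
    gammaF n (f + g) = gammaF n f + gammaF n g := by
  unfold gammaF
  show (f (a 1, xa 0) + g (a 1, xa 0)) + (f (xa (-1), a 1) + g (xa (-1), a 1)) = _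
  ring

lemma gammaF_smul (c : ZMod 2) (f : GG n × GG n → ZMod 2) :
    gammaF n (c • f) = c * gammaF n f := by
  unfold gammaF
  show c * f (a 1, xa 0) + c * f (xa (-1), a 1) = _
  ring

noncomputable def alphaLM (n : ℕ) : twoCocycles (AA n) →ₗ[ZMod 2] ZMod 2 where
  toFun f := alphaF n (f : GG n × GG n → ZMod 2)
  map_add' f g := alphaF_add _ _
  map_smul' c f := alphaF_smul c _

noncomputable def betaLM (n : ℕ) : twoCocycles (AA n) →ₗ[ZMod 2] ZMod 2 where
  toFun f := betaF n (f : GG n × GG n → ZMod 2)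
  map_add' f g := betaF_add _ _
  map_smul' c f := betaF_smul c _

noncomputable def gammaLM (n : ℕ) : twoCocycles (AA n) →ₗ[ZMod 2] ZMod 2 where
  toFun f := gammaF n (f : GG n × GG n → ZMod 2)
  map_add' f g := gammaF_add _ _
  map_smul' c f := gammaF_smul c _

noncomputable def isoH2' (n : ℕ) :
    (twoCocycles (AA n) ⧸ twoCoboundaries (AA n)) ≃ₗ[ZMod 2] groupCohomology (AA n) 2 :=
  (Submodule.quotEquivOfEq _ _ (by
      ext x
      rw [LinearMap.mem_ker]
      exact (H2π_eq_zero_iff x).symm)).trans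
    ((H2π (AA n)).hom.quotKerEquivOfSurjective
      ((ModuleCat.epi_iff_surjective _).mp inferInstance))

theorem main_odd (hn : 1 ≤ n) (ho : Odd n) :
    Nonempty (groupCohomology (AA n) 2 ≃+ ZMod 2) := by
  have hle : twoCoboundaries (AA n) ≤ LinearMap.ker (alphaLM n) := by
    intro b hb
    obtain ⟨φ, hφ⟩ := (mem_cb b).mp hb
    exact LinearMap.mem_ker.mpr (alphaF_cob _ φ hφ)
  set Lbar := Submodule.liftQ (twoCoboundaries (AA n)) (alphaLM n) hle with hLbar
  have hinj : Function.Injective Lbar := by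
    rw [← LinearMap.ker_eq_bot]
    refine Submodule.ker_liftQ_eq_bot _ _ _ ?_
    intro f hf
    have hco : IsCo n (f : GG n × GG n → ZMod 2) := (mem_tc _).mp f.2
    obtain ⟨φ, hφ⟩ := ker_to_cob hn _ hco (Or.inl ⟨ho, LinearMap.mem_ker.mp hf⟩)
    exact (mem_cb f).mpr ⟨φ, hφ⟩
  have hsurj : Function.Surjective Lbar := by
    intro t
    set F0 : twoCocycles (AA n) :=
      ⟨fun p => carry (psiF n p.1) (psiF n p.2), (mem_tc _).mpr (fodd_co ho)⟩ with hF0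
    refine ⟨Submodule.Quotient.mk (t • F0), ?_⟩
    rw [hLbar, Submodule.liftQ_apply, map_smul]
    have hval : alphaLM n F0 = 1 := alpha_fodd ho
    rw [hval, smul_eq_mul, mul_one]
  exact ⟨((isoH2' n).symm.trans
    (LinearEquiv.ofBijective Lbar ⟨hinj, hsurj⟩)).toAddEquiv⟩

theorem main_even (hn : 1 ≤ n) (he : Even n) :
    Nonempty (groupCohomology (AA n) 2 ≃+ (Fin 2 → ZMod 2)) := by
  set L : twoCocycles (AA n) →ₗ[ZMod 2] (Fin 2 → ZMod 2) :=
    LinearMap.pi ![betaLM n, gammaLM n] with hL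
  have hL0 : ∀ f, L f 0 = betaLM n f := fun f => rfl
  have hL1 : ∀ f, L f 1 = gammaLM n f := fun f => rfl
  have hle : twoCoboundaries (AA n) ≤ LinearMap.ker L := by
    intro b hb
    obtain ⟨φ, hφ⟩ := (mem_cb b).mp hb
    have h0 : L b 0 = (0 : Fin 2 → ZMod 2) 0 := by
      rw [hL0]; exact betaF_cob hn he _ φ hφ
    have h1 : L b 1 = (0 : Fin 2 → ZMod 2) 1 := by
      rw [hL1]; exact gammaF_cob _ φ hφ
    refine LinearMap.mem_ker.mpr (funext fun i => ?_)
    fin_cases i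
    · exact h0
    · exact h1
  set Lbar := Submodule.liftQ (twoCoboundaries (AA n)) L hle with hLbar
  have hinj : Function.Injective Lbar := by
    rw [← LinearMap.ker_eq_bot]
    refine Submodule.ker_liftQ_eq_bot _ _ _ ?_
    intro f hf
    have hco : IsCo n (f : GG n × GG n → ZMod 2) := (mem_tc _).mp f.2
    have hf' := LinearMap.mem_ker.mp hf
    have hb : betaF n (f : GG n × GG n → ZMod 2) = 0 := by
      have h := congrFun hf' 0
      rw [hL0] at h
      exact h
    have hg : gammaF n (f : GG n × GG n → ZMod 2) = 0 := by
      have h := congrFun hf' 1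
      rw [hL1] at h
      exact h
    obtain ⟨φ, hφ⟩ := ker_to_cob hn _ hco (Or.inr ⟨he, hb, hg⟩)
    exact (mem_cb f).mpr ⟨φ, hφ⟩
  have hsurj : Function.Surjective Lbar := by
    intro v
    set F1 : twoCocycles (AA n) :=
      ⟨fun p => yF n p.1 * yF n p.2, (mem_tc _).mpr (cup_co _ _ yF_mul yF_mul)⟩ with hF1
    set F2 : twoCocycles (AA n) :=
      ⟨fun p => xF n p.1 * yF n p.2, (mem_tc _).mpr (cup_co _ _ (xF_mul he) yF_mul)⟩ with hF2
    refine ⟨Submodule.Quotient.mk (v 0 • F1 + v 1 • F2), ?_⟩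
    rw [hLbar, Submodule.liftQ_apply]
    have hb1 : betaLM n F1 = 1 := beta_yy
    have hb2 : betaLM n F2 = 0 := beta_xy
    have hg1 : gammaLM n F1 = 0 := gamma_yy
    have hg2 : gammaLM n F2 = 1 := gamma_xy
    have h0 : L (v 0 • F1 + v 1 • F2) 0 = v 0 := by
      rw [hL0, map_add, map_smul, map_smul, hb1, hb2, smul_eq_mul, smul_eq_mul,
        mul_one, mul_zero, add_zero]
    have h1 : L (v 0 • F1 + v 1 • F2) 1 = v 1 := by
      rw [hL1, map_add, map_smul, map_smul, hg1, hg2, smul_eq_mul, smul_eq_mul,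
        mul_one, mul_zero, zero_add]
    funext i
    fin_cases i
    · exact h0
    · exact h1
  exact ⟨((isoH2' n).symm.trans
    (LinearEquiv.ofBijective Lbar ⟨hinj, hsurj⟩)).toAddEquiv⟩

end Assemble

/-- `H²(G, ℤ/pℤ)`: degree-2 group cohomology of `G` with coefficients in `ℤ/pℤ` regarded as
a trivial `G`-module. -/
noncomputable abbrev H2mod (G : Type) [Group G] (p : ℕ) : Type :=
  groupCohomology (Rep.trivial (ZMod p) G (ZMod p)) 2

/-- For `n ≥ 1`: the mod 2 second cohomology of the dicyclic (binary dihedral) group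
`Q_{4n} = QuaternionGroup n` is `ℤ/2ℤ` if `n` is odd and `(ℤ/2ℤ)²` if `n` is even. -/
theorem h2_quaternionGroup_zmod_two (n : ℕ) (hn : 1 ≤ n) :
    (Odd n → Nonempty (H2mod (QuaternionGroup n) 2 ≃+ ZMod 2)) ∧
    (Even n → Nonempty (H2mod (QuaternionGroup n) 2 ≃+ (Fin 2 → ZMod 2))) :=
  ⟨fun ho => main_odd hn ho, fun he => main_even hn he⟩
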